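/- Main value-error decomposition (Theorem 1): Fix task MDP M_i with bounded rewards |R_i| ≤ R_max, encoder Φ : S → C, latent Markov approximation (P̄_i^Φ, R̄_i^Φ), a learned world model (P̂(·|c,a,z), R̂(c,a,z)) also conditioned on the true task index i, and a latent policy π. Assume: (abstraction) ‖P_i^Φ(·|s,a) − P̄_i^Φ(·|Φ(s),a)‖₁ ≤ ε_abs^P and |R_i(s,a) − R̄_i^Φ(Φ(s),a)| ≤ ε_abs^R for all (s,a); (model) ‖P̂(·|c,a,i) − P̄_i^Φ(·|c,a)‖₁ ≤ ε_mod^P and |R̂(c,a,i) − R̄_i^Φ(c,a)| ≤ ε_mod^R for all (c,a); (task inference) ‖P̂(·|c,a,z) − P̂(·|c,a,i)‖₁ ≤ ε_task^P and |R̂(c,a,z) − R̂(c,a,i)| ≤ ε_task^R for all (c,a). Assume all reward functions are bounded by R_max. Then sup_s |V_{M_i}^{π^Φ}(s) − V_{M̂(z)}^{π}(Φ(s))| ≤ (ε_abs^R + ε_mod^R + ε_task^R)/(1−γ) + γ R_max (ε_abs^P + ε_mod^P + ε_task^P)/(1−γ)², where M̂(z) is the latent MDP induced by (P̂(·|c,a,z),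 R̂(c,a,z)) and π^Φ(a|s) = π(a|Φ(s)). -/

import Mathlib

open Finset Filter Topology

/-- The state distribution at time `n` when starting from state `x0`,
following policy `π` and transition kernel `P`. -/
noncomputable def stateDist {X A : Type*} [Fintype X] [Fintype A] [DecidableEq X]
    (P : X → A → X → ℝ) (π : X → A → ℝ) (x0 : X) : ℕ → X → ℝ
  | 0 => fun x => if x = x0 then 1 else 0
  | n + 1 => fun x' => ∑ x, ∑ a, stateDist P π x0 n x * π x a * P x a x'

/-- The infinite-horizon discounted value of stationary policy `π` in the MDP
with reward `R`, transition kernel `P`, and discount `γ`, starting from `x0`. -/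
noncomputable def value {X A : Type*} [Fintype X] [Fintype A] [DecidableEq X]
    (R : X → A → ℝ) (P : X → A → X → ℝ) (π : X → A → ℝ) (γ : ℝ) (x0 : X) : ℝ :=
  ∑' n : ℕ, γ ^ n * ∑ x, ∑ a, stateDist P π x0 n x * π x a * R x a

/-- The policy Bellman operator. -/
noncomputable def bellmanOp {X A : Type*} [Fintype X] [Fintype A]
    (R : X → A → ℝ) (P : X → A → X → ℝ) (π : X → A → ℝ) (γ : ℝ)
    (V : X → ℝ) : X → ℝ :=
  fun x => ∑ a, π x a * (R x a + γ * ∑ x', P x a x' * V x')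

/-- The pushforward transition kernel induced by an encoder `Φ`. -/
noncomputable def pushKernel {S A C : Type*} [Fintype S] [DecidableEq C]
    (P : S → A → S → ℝ) (Φ : S → C) : S → A → C → ℝ :=
  fun s a c => ∑ s', P s a s' * (if Φ s' = c then 1 else 0)

section aux
variable {X A : Type*} [Fintype X] [Fintype A] [DecidableEq X]

noncomputable def rterm (R : X → A → ℝ) (P : X → A → X → ℝ) (π : X → A → ℝ)
    (x0 : X) (n : ℕ) : ℝ :=
  ∑ x, ∑ a, stateDist P π x0 n x * π x a * R x a

lemma value_eq_tsum_rterm (R : X → A → ℝ) (P : X → A → X → ℝ) (π : X → A → ℝ)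
    (γ : ℝ) (x0 : X) : value R P π γ x0 = ∑' n, γ ^ n * rterm R P π x0 n := rfl

lemma stateDist_nonneg (P : X → A → X → ℝ) (π : X → A → ℝ)
    (hπ0 : ∀ x a, 0 ≤ π x a) (hP0 : ∀ x a y, 0 ≤ P x a y) (x0 : X) :
    ∀ n x, 0 ≤ stateDist P π x0 n x := by
  intro n
  induction n with
  | zero => intro x; simp only [stateDist]; split <;> norm_num
  | succ n ih =>
    intro x
    simp only [stateDist]
    exact Finset.sum_nonneg fun y _ => Finset.sum_nonneg fun a _ =>
      mul_nonneg (mul_nonneg (ih y) (hπ0 y a)) (hP0 y a x)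

lemma stateDist_sum_one (P : X → A → X → ℝ) (π : X → A → ℝ)
    (hπ1 : ∀ x, ∑ a, π x a = 1) (hP1 : ∀ x a, ∑ y, P x a y = 1) (x0 : X) :
    ∀ n, ∑ x, stateDist P π x0 n x = 1 := by
  intro n
  induction n with
  | zero => simp [stateDist]
  | succ n ih =>
    simp only [stateDist]
    rw [Finset.sum_comm]
    have key : ∀ x, ∑ x', ∑ a, stateDist P π x0 n x * π x a * P x a x'
        = stateDist P π x0 n x := by
      intro x
      rw [Finset.sum_comm]
      have : ∀ a, ∑ x', stateDist P π x0 n x * π x a * P x a x'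
          = stateDist P π x0 n x * π x a := by
        intro a
        rw [← Finset.mul_sum, hP1, mul_one]
      rw [Finset.sum_congr rfl fun a _ => this a, ← Finset.mul_sum, hπ1, mul_one]
    rw [Finset.sum_congr rfl fun x _ => key x, ih]

lemma stateDist_succ (P : X → A → X → ℝ) (π : X → A → ℝ) :
    ∀ (n : ℕ) (x0 y : X), stateDist P π x0 (n+1) y =
      ∑ x1, (∑ a, π x0 a * P x0 a x1) * stateDist P π x1 n y := by
  intro n
  induction n with
  | zero =>
    intro x0 y
    simp only [stateDist]
    rw [Finset.sum_comm]
    simp only [ite_mul, one_mul, zero_mul, mul_ite, mul_one, mul_zero,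
      Finset.sum_ite_eq', Finset.sum_ite_eq, Finset.mem_univ, if_true]
  | succ n ih =>
    intro x0 y
    have expand : stateDist P π x0 (n+2) y
        = ∑ x, ∑ a, stateDist P π x0 (n+1) x * π x a * P x a y := rfl
    rw [expand]
    have : ∀ x a, stateDist P π x0 (n+1) x * π x a * P x a y
        = ∑ x1, (∑ b, π x0 b * P x0 b x1) * (stateDist P π x1 n x * π x a * P x a y) := by
      intro x a
      rw [ih x0 x, Finset.sum_mul, Finset.sum_mul]
      exact Finset.sum_congr rfl fun x1 _ => by ring
    calc ∑ x, ∑ a, stateDist P π x0 (n+1) x * π x a * P x a y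
        = ∑ x, ∑ a, ∑ x1, (∑ b, π x0 b * P x0 b x1) *
            (stateDist P π x1 n x * π x a * P x a y) := by
          exact Finset.sum_congr rfl fun x _ => Finset.sum_congr rfl fun a _ => this x a
      _ = ∑ x1, ∑ x, ∑ a, (∑ b, π x0 b * P x0 b x1) *
            (stateDist P π x1 n x * π x a * P x a y) := by
          have h1 : (∑ x, ∑ a, ∑ x1, (∑ b, π x0 b * P x0 b x1) *
              (stateDist P π x1 n x * π x a * P x a y))
              = ∑ x, ∑ x1, ∑ a, (∑ b, π x0 b * P x0 b x1) *
              (stateDist P π x1 n x * π x a * P x a y) :=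
            Finset.sum_congr rfl fun x _ => Finset.sum_comm
          rw [h1]
          exact Finset.sum_comm
      _ = ∑ x1, (∑ b, π x0 b * P x0 b x1) *
            ∑ x, ∑ a, stateDist P π x1 n x * π x a * P x a y := by
          exact Finset.sum_congr rfl fun x1 _ => by
            rw [Finset.mul_sum]
            exact Finset.sum_congr rfl fun x _ => by rw [Finset.mul_sum]
      _ = ∑ x1, (∑ a, π x0 a * P x0 a x1) * stateDist P π x1 (n+1) y := rfl

end aux

section aux2
variable {X A : Type*} [Fintype X] [Fintype A] [DecidableEq X]
variable (R : X → A → ℝ) (P : X → A → X → ℝ) (π : X → A → ℝ) (γ Rmax : ℝ)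

lemma rterm_abs_le
    (hπ0 : ∀ x a, 0 ≤ π x a) (hπ1 : ∀ x, ∑ a, π x a = 1)
    (hP0 : ∀ x a y, 0 ≤ P x a y) (hP1 : ∀ x a, ∑ y, P x a y = 1)
    (hR : ∀ x a, |R x a| ≤ Rmax) (x0 : X) (n : ℕ) :
    |rterm R P π x0 n| ≤ Rmax := by
  have hd0 := stateDist_nonneg P π hπ0 hP0 x0 n
  have hd1 := stateDist_sum_one P π hπ1 hP1 x0 n
  calc |rterm R P π x0 n|
      ≤ ∑ x, ∑ a, |stateDist P π x0 n x * π x a * R x a| :=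
        (Finset.abs_sum_le_sum_abs _ _).trans (Finset.sum_le_sum fun x _ =>
          Finset.abs_sum_le_sum_abs _ _)
    _ ≤ ∑ x, ∑ a, stateDist P π x0 n x * π x a * Rmax := by
        refine Finset.sum_le_sum fun x _ => Finset.sum_le_sum fun a _ => ?_
        rw [abs_mul, abs_mul, abs_of_nonneg (hd0 x), abs_of_nonneg (hπ0 x a)]
        exact mul_le_mul_of_nonneg_left (hR x a)
          (mul_nonneg (hd0 x) (hπ0 x a))
    _ = Rmax := by
        have : ∀ x, ∑ a, stateDist P π x0 n x * π x a * Rmax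
            = stateDist P π x0 n x * Rmax := by
          intro x
          have : ∀ a, stateDist P π x0 n x * π x a * Rmax
              = stateDist P π x0 n x * Rmax * π x a := fun a => by ring
          rw [Finset.sum_congr rfl fun a _ => this a, ← Finset.mul_sum, hπ1, mul_one]
        rw [Finset.sum_congr rfl fun x _ => this x, ← Finset.sum_mul, hd1, one_mul]

lemma summable_rterm
    (hγ0 : 0 ≤ γ) (hγ1 : γ < 1)
    (hπ0 : ∀ x a, 0 ≤ π x a) (hπ1 : ∀ x, ∑ a, π x a = 1)
    (hP0 : ∀ x a y, 0 ≤ P x a y) (hP1 : ∀ x a, ∑ y, P x a y = 1)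
    (hR : ∀ x a, |R x a| ≤ Rmax) (x0 : X) :
    Summable (fun n => γ ^ n * rterm R P π x0 n) := by
  refine Summable.of_norm_bounded (g := fun n => γ ^ n * Rmax)
    ((summable_geometric_of_lt_one hγ0 hγ1).mul_right Rmax) (fun n => ?_)
  rw [Real.norm_eq_abs, abs_mul, abs_pow, abs_of_nonneg hγ0]
  exact mul_le_mul_of_nonneg_left
    (rterm_abs_le R P π Rmax hπ0 hπ1 hP0 hP1 hR x0 n) (pow_nonneg hγ0 n)

lemma value_abs_le
    (hγ0 : 0 ≤ γ) (hγ1 : γ < 1)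
    (hπ0 : ∀ x a, 0 ≤ π x a) (hπ1 : ∀ x, ∑ a, π x a = 1)
    (hP0 : ∀ x a y, 0 ≤ P x a y) (hP1 : ∀ x a, ∑ y, P x a y = 1)
    (hR : ∀ x a, |R x a| ≤ Rmax) (x0 : X) :
    |value R P π γ x0| ≤ Rmax / (1 - γ) := by
  have hgeo : HasSum (fun n : ℕ => γ ^ n * Rmax) ((1 - γ)⁻¹ * Rmax) :=
    (hasSum_geometric_of_lt_one hγ0 hγ1).mul_right Rmax
  have h := tsum_of_norm_bounded (f := fun n => γ ^ n * rterm R P π x0 n) hgeo (fun n => by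
    rw [Real.norm_eq_abs, abs_mul, abs_pow, abs_of_nonneg hγ0]
    exact mul_le_mul_of_nonneg_left
      (rterm_abs_le R P π Rmax hπ0 hπ1 hP0 hP1 hR x0 n) (pow_nonneg hγ0 n))
  rw [value_eq_tsum_rterm]
  calc |∑' n, γ ^ n * rterm R P π x0 n|
      = ‖∑' n, γ ^ n * rterm R P π x0 n‖ := (Real.norm_eq_abs _).symm
    _ ≤ (1 - γ)⁻¹ * Rmax := h
    _ = Rmax / (1 - γ) := by rw [div_eq_mul_inv, mul_comm]

lemma rterm_succ (x0 : X) (n : ℕ) :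
    rterm R P π x0 (n + 1)
      = ∑ x1, (∑ a, π x0 a * P x0 a x1) * rterm R P π x1 n := by
  unfold rterm
  have h : ∀ x a, stateDist P π x0 (n+1) x * π x a * R x a
      = ∑ x1, (∑ b, π x0 b * P x0 b x1) *
          (stateDist P π x1 n x * π x a * R x a) := by
    intro x a
    rw [stateDist_succ, Finset.sum_mul, Finset.sum_mul]
    exact Finset.sum_congr rfl fun x1 _ => by ring
  calc ∑ x, ∑ a, stateDist P π x0 (n+1) x * π x a * R x a
      = ∑ x, ∑ a, ∑ x1, (∑ b, π x0 b * P x0 b x1) *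
          (stateDist P π x1 n x * π x a * R x a) :=
        Finset.sum_congr rfl fun x _ => Finset.sum_congr rfl fun a _ => h x a
    _ = ∑ x, ∑ x1, ∑ a, (∑ b, π x0 b * P x0 b x1) *
          (stateDist P π x1 n x * π x a * R x a) :=
        Finset.sum_congr rfl fun x _ => Finset.sum_comm
    _ = ∑ x1, ∑ x, ∑ a, (∑ b, π x0 b * P x0 b x1) *
          (stateDist P π x1 n x * π x a * R x a) := Finset.sum_comm
    _ = ∑ x1, (∑ b, π x0 b * P x0 b x1) *
          ∑ x, ∑ a, stateDist P π x1 n x * π x a * R x a :=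
        Finset.sum_congr rfl fun x1 _ => by
          rw [Finset.mul_sum]
          exact Finset.sum_congr rfl fun x _ => by rw [Finset.mul_sum]

lemma rterm_zero (x0 : X) : rterm R P π x0 0 = ∑ a, π x0 a * R x0 a := by
  unfold rterm
  simp only [stateDist, ite_mul, one_mul, zero_mul]
  rw [Finset.sum_comm]
  simp [Finset.sum_ite_eq', Finset.mem_univ]

lemma value_eq_bellman
    (hγ0 : 0 ≤ γ) (hγ1 : γ < 1)
    (hπ0 : ∀ x a, 0 ≤ π x a) (hπ1 : ∀ x, ∑ a, π x a = 1)
    (hP0 : ∀ x a y, 0 ≤ P x a y) (hP1 : ∀ x a, ∑ y, P x a y = 1)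
    (hR : ∀ x a, |R x a| ≤ Rmax) (x0 : X) :
    value R P π γ x0 = bellmanOp R P π γ (value R P π γ) x0 := by
  have hsum : ∀ y : X, Summable (fun n => γ ^ n * rterm R P π y n) :=
    fun y => summable_rterm R P π γ Rmax hγ0 hγ1 hπ0 hπ1 hP0 hP1 hR y
  have key : value R P π γ x0
      = rterm R P π x0 0 + γ * ∑ x1, (∑ a, π x0 a * P x0 a x1) * value R P π γ x1 := by
    rw [value_eq_tsum_rterm, Summable.tsum_eq_zero_add (hsum x0)]
    congr 1
    · simp
    · have step : ∀ n : ℕ, γ ^ (n + 1) * rterm R P π x0 (n + 1)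
          = ∑ x1, (∑ a, π x0 a * P x0 a x1) * (γ * (γ ^ n * rterm R P π x1 n)) := by
        intro n
        rw [rterm_succ, Finset.mul_sum]
        exact Finset.sum_congr rfl fun x1 _ => by ring
      rw [tsum_congr step, Summable.tsum_finsetSum (fun x1 _ => (((hsum x1).mul_left γ).mul_left _))]
      rw [Finset.mul_sum]
      refine Finset.sum_congr rfl fun x1 _ => ?_
      rw [tsum_mul_left, tsum_mul_left, value_eq_tsum_rterm]
      ring
  rw [key, rterm_zero, bellmanOp]
  have hswap : γ * ∑ x1, (∑ a, π x0 a * P x0 a x1) * value R P π γ x1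
      = ∑ a, π x0 a * (γ * ∑ x', P x0 a x' * value R P π γ x') := by
    rw [Finset.mul_sum]
    have h1 : ∀ x1, γ * ((∑ a, π x0 a * P x0 a x1) * value R P π γ x1)
        = ∑ a, π x0 a * (γ * (P x0 a x1 * value R P π γ x1)) := by
      intro x1
      rw [Finset.sum_mul, Finset.mul_sum]
      exact Finset.sum_congr rfl fun a _ => by ring
    rw [Finset.sum_congr rfl fun x1 _ => h1 x1, Finset.sum_comm]
    refine Finset.sum_congr rfl fun a _ => ?_
    rw [← Finset.mul_sum, ← Finset.mul_sum]
  rw [hswap, ← Finset.sum_add_distrib]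
  exact Finset.sum_congr rfl fun a _ => by ring

end aux2

lemma weighted_diff_bound {A : Type*} [Fintype A] (p X Y : A → ℝ) (B : ℝ)
    (hp0 : ∀ a, 0 ≤ p a) (hp1 : ∑ a, p a = 1)
    (h : ∀ a, |X a - Y a| ≤ B) :
    |∑ a, p a * X a - ∑ a, p a * Y a| ≤ B := by
  rw [← Finset.sum_sub_distrib]
  calc |∑ a, (p a * X a - p a * Y a)|
      ≤ ∑ a, |p a * X a - p a * Y a| := Finset.abs_sum_le_sum_abs _ _
    _ = ∑ a, p a * |X a - Y a| := Finset.sum_congr rfl fun a _ => by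
        rw [← mul_sub, abs_mul, abs_of_nonneg (hp0 a)]
    _ ≤ ∑ a, p a * B := Finset.sum_le_sum fun a _ =>
        mul_le_mul_of_nonneg_left (h a) (hp0 a)
    _ = B := by rw [← Finset.sum_mul, hp1, one_mul]

lemma pushKernel_sum {S A C : Type*} [Fintype S] [Fintype C] [DecidableEq C]
    (P : S → A → S → ℝ) (Φ : S → C) (f : C → ℝ) (s : S) (a : A) :
    ∑ c', pushKernel P Φ s a c' * f c' = ∑ s', P s a s' * f (Φ s') := by
  unfold pushKernel
  simp only [Finset.sum_mul, ite_mul, one_mul, zero_mul, mul_ite, mul_zero]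
  rw [Finset.sum_comm]
  simp [Finset.sum_ite_eq, Finset.mem_univ]


theorem value_error_decomposition
    {S A C Z : Type*} [Fintype S] [Fintype A] [Fintype C]
    [DecidableEq S] [DecidableEq C]
    (R : S → A → ℝ) (P : S → A → S → ℝ) (Φ : S → C)
    (Rbar : C → A → ℝ) (Pbar : C → A → C → ℝ)
    (Rhat : Z → C → A → ℝ) (Phat : Z → C → A → C → ℝ)
    (i z : Z) (π : C → A → ℝ)
    (γ Rmax εabsR εabsP εmodR εmodP εtaskR εtaskP : ℝ)
    (hγ0 : 0 ≤ γ) (hγ1 : γ < 1)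
    (hπ0 : ∀ c a, 0 ≤ π c a) (hπ1 : ∀ c, ∑ a, π c a = 1)
    (hP0 : ∀ s a s', 0 ≤ P s a s') (hP1 : ∀ s a, ∑ s', P s a s' = 1)
    (hPbar0 : ∀ c a c', 0 ≤ Pbar c a c') (hPbar1 : ∀ c a, ∑ c', Pbar c a c' = 1)
    (hPhat0 : ∀ w c a c', 0 ≤ Phat w c a c') (hPhat1 : ∀ w c a, ∑ c', Phat w c a c' = 1)
    (hR : ∀ s a, |R s a| ≤ Rmax) (hRbar : ∀ c a, |Rbar c a| ≤ Rmax)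
    (hRhat : ∀ w c a, |Rhat w c a| ≤ Rmax)
    (habsP : ∀ s a, ∑ c', |pushKernel P Φ s a c' - Pbar (Φ s) a c'| ≤ εabsP)
    (habsR : ∀ s a, |R s a - Rbar (Φ s) a| ≤ εabsR)
    (hmodP : ∀ c a, ∑ c', |Phat i c a c' - Pbar c a c'| ≤ εmodP)
    (hmodR : ∀ c a, |Rhat i c a - Rbar c a| ≤ εmodR)
    (htaskP : ∀ c a, ∑ c', |Phat z c a c' - Phat i c a c'| ≤ εtaskP)
    (htaskR : ∀ c a, |Rhat z c a - Rhat i c a| ≤ εtaskR) :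
    ∀ s, |value R P (fun s a => π (Φ s) a) γ s - value (Rhat z) (Phat z) π γ (Φ s)| ≤
      (εabsR + εmodR + εtaskR) / (1 - γ) +
        γ * Rmax * (εabsP + εmodP + εtaskP) / (1 - γ) ^ 2 := by
  
  intro s
  haveI hS : Nonempty S := ⟨s⟩
  have hA : Nonempty A := by
    by_contra h
    rw [not_nonempty_iff] at h
    have := hπ1 (Φ s)
    simp [Finset.univ_eq_empty] at this
  have hRmax0 : 0 ≤ Rmax := le_trans (abs_nonneg _) (hR s (Classical.arbitrary A))
  have h1γ : (0:ℝ) < 1 - γ := by linarith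
  set M : ℝ := Rmax / (1 - γ) with hM
  have hM0 : 0 ≤ M := div_nonneg hRmax0 h1γ.le
  set εR : ℝ := εabsR + εmodR + εtaskR with hεR
  set εP : ℝ := εabsP + εmodP + εtaskP with hεP
  set V1 : S → ℝ := value R P (fun s a => π (Φ s) a) γ with hV1
  set V2 : C → ℝ := value (Rhat z) (Phat z) π γ with hV2
  have hV1bell : ∀ s0, V1 s0 = bellmanOp R P (fun s a => π (Φ s) a) γ V1 s0 :=
    fun s0 => value_eq_bellman R P _ γ Rmax hγ0 hγ1 (fun x a => hπ0 (Φ x) a)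
      (fun x => hπ1 (Φ x)) hP0 hP1 hR s0
  have hV2bell : ∀ c0, V2 c0 = bellmanOp (Rhat z) (Phat z) π γ V2 c0 :=
    fun c0 => value_eq_bellman _ _ _ γ Rmax hγ0 hγ1 hπ0 hπ1 (hPhat0 z) (hPhat1 z)
      (hRhat z) c0
  have hV2bd : ∀ c0, |V2 c0| ≤ M :=
    fun c0 => value_abs_le _ _ _ γ Rmax hγ0 hγ1 hπ0 hπ1 (hPhat0 z) (hPhat1 z) (hRhat z) c0
  set D : ℝ := Finset.univ.sup' Finset.univ_nonempty (fun s0 : S => |V1 s0 - V2 (Φ s0)|)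
    with hD
  have hDmem : ∀ s0 : S, |V1 s0 - V2 (Φ s0)| ≤ D :=
    fun s0 => Finset.le_sup' (fun s0 : S => |V1 s0 - V2 (Φ s0)|) (Finset.mem_univ s0)
  -- reward error
  have hRdiff : ∀ (s0 : S) (a : A), |R s0 a - Rhat z (Φ s0) a| ≤ εR := by
    intro s0 a
    calc |R s0 a - Rhat z (Φ s0) a|
        ≤ |R s0 a - Rbar (Φ s0) a| + |Rbar (Φ s0) a - Rhat z (Φ s0) a| :=
          abs_sub_le _ _ _
      _ ≤ |R s0 a - Rbar (Φ s0) a| +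
          (|Rbar (Φ s0) a - Rhat i (Φ s0) a| + |Rhat i (Φ s0) a - Rhat z (Φ s0) a|) :=
          add_le_add le_rfl (abs_sub_le _ _ _)
      _ ≤ εabsR + (εmodR + εtaskR) := by
          refine add_le_add (habsR s0 a) (add_le_add ?_ ?_)
          · rw [abs_sub_comm]; exact hmodR (Φ s0) a
          · rw [abs_sub_comm]; exact htaskR (Φ s0) a
      _ = εR := by rw [hεR]; ring
  -- transition kernel total-variation error
  have hPtv : ∀ (s0 : S) (a : A),
      ∑ c', |pushKernel P Φ s0 a c' - Phat z (Φ s0) a c'| ≤ εP := by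
    intro s0 a
    calc ∑ c', |pushKernel P Φ s0 a c' - Phat z (Φ s0) a c'|
        ≤ ∑ c', (|pushKernel P Φ s0 a c' - Pbar (Φ s0) a c'| +
            (|Phat i (Φ s0) a c' - Pbar (Φ s0) a c'| +
             |Phat z (Φ s0) a c' - Phat i (Φ s0) a c'|)) := by
          refine Finset.sum_le_sum fun c' _ => ?_
          calc |pushKernel P Φ s0 a c' - Phat z (Φ s0) a c'|
              ≤ |pushKernel P Φ s0 a c' - Pbar (Φ s0) a c'| +
                |Pbar (Φ s0) a c' - Phat z (Φ s0) a c'| := abs_sub_le _ _ _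
            _ ≤ |pushKernel P Φ s0 a c' - Pbar (Φ s0) a c'| +
                (|Pbar (Φ s0) a c' - Phat i (Φ s0) a c'| +
                 |Phat i (Φ s0) a c' - Phat z (Φ s0) a c'|) :=
                add_le_add le_rfl (abs_sub_le _ _ _)
            _ = |pushKernel P Φ s0 a c' - Pbar (Φ s0) a c'| +
                (|Phat i (Φ s0) a c' - Pbar (Φ s0) a c'| +
                 |Phat z (Φ s0) a c' - Phat i (Φ s0) a c'|) := by
                rw [abs_sub_comm (Pbar (Φ s0) a c') (Phat i (Φ s0) a c'),
                  abs_sub_comm (Phat i (Φ s0) a c') (Phat z (Φ s0) a c')]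
      _ = (∑ c', |pushKernel P Φ s0 a c' - Pbar (Φ s0) a c'|) +
          ((∑ c', |Phat i (Φ s0) a c' - Pbar (Φ s0) a c'|) +
           (∑ c', |Phat z (Φ s0) a c' - Phat i (Φ s0) a c'|)) := by
          rw [Finset.sum_add_distrib, Finset.sum_add_distrib]
      _ ≤ εabsP + (εmodP + εtaskP) :=
          add_le_add (habsP s0 a) (add_le_add (hmodP (Φ s0) a) (htaskP (Φ s0) a))
      _ = εP := by rw [hεP]; ring
  -- key contraction inequality
  have key : ∀ s0 : S, |V1 s0 - V2 (Φ s0)| ≤ εR + γ * (D + εP * M) := by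
    intro s0
    rw [hV1bell s0, hV2bell (Φ s0)]
    simp only [bellmanOp]
    refine weighted_diff_bound (π (Φ s0)) _ _ _ (hπ0 (Φ s0)) (hπ1 (Φ s0)) fun a => ?_
    have hPdiff : |(∑ s', P s0 a s' * V1 s') - ∑ c', Phat z (Φ s0) a c' * V2 c'|
        ≤ D + εP * M := by
      have hsplit : (∑ s', P s0 a s' * V1 s') - ∑ c', Phat z (Φ s0) a c' * V2 c'
          = (∑ s', P s0 a s' * (V1 s' - V2 (Φ s'))) +
            ∑ c', (pushKernel P Φ s0 a c' - Phat z (Φ s0) a c') * V2 c' := by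
        have h1 : ∑ c', (pushKernel P Φ s0 a c' - Phat z (Φ s0) a c') * V2 c'
            = (∑ c', pushKernel P Φ s0 a c' * V2 c')
              - ∑ c', Phat z (Φ s0) a c' * V2 c' := by
          rw [← Finset.sum_sub_distrib]
          exact Finset.sum_congr rfl fun c' _ => by ring
        have h2 : ∑ s', P s0 a s' * (V1 s' - V2 (Φ s'))
            = (∑ s', P s0 a s' * V1 s') - ∑ s', P s0 a s' * V2 (Φ s') := by
          rw [← Finset.sum_sub_distrib]
          exact Finset.sum_congr rfl fun s' _ => by ring
        rw [h1, h2, pushKernel_sum]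
        ring
      rw [hsplit]
      refine (abs_add_le _ _).trans (add_le_add ?_ ?_)
      · calc |∑ s', P s0 a s' * (V1 s' - V2 (Φ s'))|
            ≤ ∑ s', |P s0 a s' * (V1 s' - V2 (Φ s'))| := Finset.abs_sum_le_sum_abs _ _
          _ ≤ ∑ s', P s0 a s' * D := Finset.sum_le_sum fun s' _ => by
              rw [abs_mul, abs_of_nonneg (hP0 s0 a s')]
              exact mul_le_mul_of_nonneg_left (hDmem s') (hP0 s0 a s')
          _ = D := by rw [← Finset.sum_mul, hP1, one_mul]
      · calc |∑ c', (pushKernel P Φ s0 a c' - Phat z (Φ s0) a c') * V2 c'|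
            ≤ ∑ c', |pushKernel P Φ s0 a c' - Phat z (Φ s0) a c'| * M := by
              refine (Finset.abs_sum_le_sum_abs _ _).trans
                (Finset.sum_le_sum fun c' _ => ?_)
              rw [abs_mul]
              exact mul_le_mul_of_nonneg_left (hV2bd c') (abs_nonneg _)
          _ = (∑ c', |pushKernel P Φ s0 a c' - Phat z (Φ s0) a c'|) * M := by
              rw [Finset.sum_mul]
          _ ≤ εP * M := mul_le_mul_of_nonneg_right (hPtv s0 a) hM0
    calc |(R s0 a + γ * ∑ s', P s0 a s' * V1 s') -
          (Rhat z (Φ s0) a + γ * ∑ c', Phat z (Φ s0) a c' * V2 c')|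
        = |(R s0 a - Rhat z (Φ s0) a) +
            γ * ((∑ s', P s0 a s' * V1 s') - ∑ c', Phat z (Φ s0) a c' * V2 c')| := by
          ring_nf
      _ ≤ |R s0 a - Rhat z (Φ s0) a| +
          γ * |(∑ s', P s0 a s' * V1 s') - ∑ c', Phat z (Φ s0) a c' * V2 c'| := by
          refine (abs_add_le _ _).trans (add_le_add le_rfl ?_)
          rw [abs_mul, abs_of_nonneg hγ0]
      _ ≤ εR + γ * (D + εP * M) :=
          add_le_add (hRdiff s0 a) (mul_le_mul_of_nonneg_left hPdiff hγ0)
  have hDle : D ≤ εR + γ * (D + εP * M) :=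
    Finset.sup'_le _ _ fun s0 _ => key s0
  have hDfin : D ≤ (εR + γ * εP * M) / (1 - γ) := by
    rw [le_div_iff₀ h1γ]
    nlinarith [hDle]
  have hfinal : (εR + γ * εP * M) / (1 - γ)
      = εR / (1 - γ) + γ * Rmax * εP / (1 - γ) ^ 2 := by
    rw [hM]
    field_simp
  exact (hDmem s).trans (hDfin.trans (le_of_eq hfinal))
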